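/- Let σ ∈ S_r and λ ⊢ n with n > r. In Young's orthogonal representation ordered by the last-letter order, π^λ(σ)_{i,j} = 0 whenever |i − j| > r!. -/

import Mathlib

open scoped Classical

noncomputable section

/-- A standard Young tableau of shape `μ ⊢ n`: a listing of the cells of `μ`
(`pos i` is the cell containing the entry `i+1`) increasing along rows and columns. -/
structure SYT (μ : YoungDiagram) where
  pos : Fin μ.card → ℕ × ℕ
  inj : Function.Injective pos
  range_eq : ∀ c : ℕ × ℕ, (∃ i, pos i = c) ↔ c ∈ μ
  row_lt : ∀ a b, (pos a).1 = (pos b).1 → (pos a).2 < (pos b).2 → a < b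
  col_lt : ∀ a b, (pos a).2 = (pos b).2 → (pos a).1 < (pos b).1 → a < b

/-- The content of a box `(i, j)` (row `i`, column `j`) is `j − i`. -/
def content (c : ℕ × ℕ) : ℝ := (c.2 : ℝ) - (c.1 : ℝ)

/-- `ρ` is Young's orthogonal representation of `S_{|μ|}` for the shape `μ`, given entrywise
on the basis of standard Young tableaux: it is multiplicative, sends `1` to the identity
matrix, and on an adjacent transposition `(k, k+1)` (labels `a+1, b+1` with `b = a+1`) the
`(T, S)` entry is `1/d_k(T)` if `S = T`, `√(1 − 1/d_k(T)²)` if `S = (k, k+1)T`, and `0`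
otherwise, where `d_k(T)` is the signed content distance between `k` and `k+1` in `T`. -/
def IsYoungOrthogonal (μ : YoungDiagram)
    (ρ : Equiv.Perm (Fin μ.card) → SYT μ → SYT μ → ℝ) : Prop :=
  (∀ T S : SYT μ, ρ 1 T S = if T = S then 1 else 0) ∧
  (∀ σ τ : Equiv.Perm (Fin μ.card), ∀ T S : SYT μ,
    ρ (σ * τ) T S = ∑ᶠ U : SYT μ, ρ σ T U * ρ τ U S) ∧
  (∀ a b : Fin μ.card, (b : ℕ) = (a : ℕ) + 1 → ∀ T S : SYT μ,
    ρ (Equiv.swap a b) T S =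
      if S = T then 1 / (content (T.pos a) - content (T.pos b))
      else if S.pos = T.pos ∘ (Equiv.swap a b) then
        Real.sqrt (1 - 1 / (content (T.pos a) - content (T.pos b)) ^ 2)
      else 0)

/-- The last-letter strict order on standard Young tableaux: `T` precedes `S` if, at the
largest entry whose row differs between the two tableaux, the row index in `T` is larger
(the box lies in a lower row in `T`). -/
def lastLetterLT {μ : YoungDiagram} (T S : SYT μ) : Prop :=
  ∃ k : Fin μ.card, (S.pos k).1 < (T.pos k).1 ∧
    ∀ j : Fin μ.card, k < j → (T.pos j).1 = (S.pos j).1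

/-- The (0-based) index of a standard Young tableau in the last-letter order. -/
def llIndex {μ : YoungDiagram} (T : SYT μ) : ℕ :=
  Nat.card {S : SYT μ // lastLetterLT S T}

variable {μ : YoungDiagram}

theorem SYT.pos_mem (U : SYT μ) (i : Fin μ.card) : U.pos i ∈ μ :=
  (U.range_eq _).1 ⟨i, rfl⟩

theorem SYT.ext' {U V : SYT μ} (h : U.pos = V.pos) : U = V := by
  cases U; cases V; cases h; rfl

instance : Finite (SYT μ) := by
  have : Function.Injective (fun (U : SYT μ) (i : Fin μ.card) =>
      (⟨U.pos i, by simpa using U.pos_mem i⟩ : {c // c ∈ μ.cells})) := by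
    intro U V h
    exact SYT.ext' (funext fun i => congrArg Subtype.val (congrFun h i))
  exact Finite.of_injective _ this

theorem SYT.col_eq (U : SYT μ) (j : Fin μ.card) :
    (U.pos j).2 = (Finset.univ.filter fun k => k < j ∧ (U.pos k).1 = (U.pos j).1).card := by
  rw [← Finset.card_range (U.pos j).2]
  symm
  apply Finset.card_bij (fun k _ => (U.pos k).2)
  · intro k hk
    simp only [Finset.mem_filter, Finset.mem_univ, true_and] at hk
    rw [Finset.mem_range]
    rcases lt_trichotomy (U.pos k).2 (U.pos j).2 with h | h | h
    · exact h
    · exact absurd (U.inj (Prod.ext hk.2 h)) (ne_of_lt hk.1)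
    · exact absurd (U.row_lt j k hk.2.symm h) (not_lt.2 (le_of_lt hk.1))
  · intro k hk k' hk' h
    simp only [Finset.mem_filter, Finset.mem_univ, true_and] at hk hk'
    exact U.inj (Prod.ext (hk.2.trans hk'.2.symm) h)
  · intro c hc
    rw [Finset.mem_range] at hc
    have hcell : ((U.pos j).1, c) ∈ μ :=
      μ.up_left_mem le_rfl (le_of_lt hc) (by simpa [Prod.mk.eta] using U.pos_mem j)
    obtain ⟨k, hk⟩ := (U.range_eq _).2 hcell
    have hrow : (U.pos k).1 = (U.pos j).1 := by rw [hk]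
    have hcol : (U.pos k).2 = c := by rw [hk]
    refine ⟨k, ?_, hcol⟩
    simp only [Finset.mem_filter, Finset.mem_univ, true_and]
    exact ⟨U.row_lt k j hrow (by rw [hcol]; exact hc), hrow⟩

theorem SYT.rowcard_eq (U : SYT μ) (a : ℕ) :
    (Finset.univ.filter fun k => (U.pos k).1 = a).card
      = (μ.cells.filter fun c => c.1 = a).card := by
  apply Finset.card_bij (fun k _ => U.pos k)
  · intro k hk
    simp only [Finset.mem_filter, Finset.mem_univ, true_and] at hk
    simp [YoungDiagram.mem_cells, U.pos_mem k, hk]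
  · intro k _ k' _ h
    exact U.inj h
  · intro c hc
    simp only [Finset.mem_filter, YoungDiagram.mem_cells] at hc
    obtain ⟨k, hk⟩ := (U.range_eq _).2 hc.1
    exact ⟨k, by simp [hk, hc.2], hk⟩

theorem SYT.ext_of_rows {U V : SYT μ} (h : ∀ j, (U.pos j).1 = (V.pos j).1) : U = V := by
  apply SYT.ext'
  funext j
  refine Prod.ext (h j) ?_
  rw [SYT.col_eq U j, SYT.col_eq V j]
  congr 1
  apply Finset.filter_congr
  intro k _
  simp [h k, h j]

theorem small_cells (lam : YoungDiagram) (r : ℕ) (hr : r ≤ lam.card) (T U : SYT lam)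
    (hA : ∀ j : Fin lam.card, r ≤ (j : ℕ) → (U.pos j).1 = (T.pos j).1)
    (i : Fin r) : ∃ i' : Fin r, T.pos (Fin.castLE hr i') = U.pos (Fin.castLE hr i) := by
  set j : Fin lam.card := Fin.castLE hr i with hj
  obtain ⟨k, hk⟩ := (T.range_eq _).2 (U.pos_mem j)
  set a : ℕ := (U.pos j).1 with ha
  suffices h : (k : ℕ) < r by
    refine ⟨⟨(k : ℕ), h⟩, ?_⟩
    have : Fin.castLE hr ⟨(k : ℕ), h⟩ = k := Fin.ext rfl
    rw [this, hk]
  by_contra hkr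
  push_neg at hkr
  -- counts of entries < r in row a
  set cntU := ((Finset.univ.filter fun k' : Fin lam.card => (U.pos k').1 = a).filter
    fun k' : Fin lam.card => (k' : ℕ) < r).card with hcntU
  set cntT := ((Finset.univ.filter fun k' : Fin lam.card => (T.pos k').1 = a).filter
    fun k' : Fin lam.card => (k' : ℕ) < r).card with hcntT
  -- f1 : (U.pos j).2 < cntU
  have f1 : (U.pos j).2 < cntU := by
    rw [SYT.col_eq U j]
    apply Finset.card_lt_card
    constructor
    · intro k' hk'
      simp only [Finset.mem_filter, Finset.mem_univ, true_and] at hk' ⊢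
      refine ⟨hk'.2, ?_⟩
      have : (k' : ℕ) < (j : ℕ) := hk'.1
      have hjr : (j : ℕ) < r := i.2
      omega
    · intro hsub
      have hjmem : j ∈ (Finset.univ.filter fun k' : Fin lam.card => (U.pos k').1 = a).filter
          fun k' : Fin lam.card => (k' : ℕ) < r := by
        simp only [Finset.mem_filter, Finset.mem_univ, true_and]
        exact ⟨ha.symm, i.2⟩
      have := hsub hjmem
      simp only [Finset.mem_filter, Finset.mem_univ, true_and] at this
      exact lt_irrefl j this.1
  -- f3 : cntT ≤ (T.pos k).2
  have f3 : cntT ≤ (T.pos k).2 := by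
    rw [SYT.col_eq T k]
    apply Finset.card_le_card
    intro k' hk'
    simp only [Finset.mem_filter, Finset.mem_univ, true_and] at hk' ⊢
    have hak : (T.pos k).1 = a := by rw [hk]
    refine ⟨?_, by rw [hak]; exact hk'.1⟩
    exact Fin.lt_def.2 (lt_of_lt_of_le hk'.2 hkr)
  -- f2 : cntU = cntT
  have tails : ((Finset.univ.filter fun k' : Fin lam.card => (U.pos k').1 = a).filter
      fun k' : Fin lam.card => ¬ (k' : ℕ) < r).card
      = ((Finset.univ.filter fun k' : Fin lam.card => (T.pos k').1 = a).filter
      fun k' : Fin lam.card => ¬ (k' : ℕ) < r).card := by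
    congr 1
    ext k'
    simp only [Finset.mem_filter, Finset.mem_univ, true_and]
    constructor
    · rintro ⟨h1, h2⟩
      exact ⟨by rw [← hA k' (not_lt.1 h2)]; exact h1, h2⟩
    · rintro ⟨h1, h2⟩
      exact ⟨by rw [hA k' (not_lt.1 h2)]; exact h1, h2⟩
  have splitU := Finset.card_filter_add_card_filter_not
    (s := Finset.univ.filter fun k' : Fin lam.card => (U.pos k').1 = a)
    (p := fun k' : Fin lam.card => (k' : ℕ) < r)
  have splitT := Finset.card_filter_add_card_filter_not
    (s := Finset.univ.filter fun k' : Fin lam.card => (T.pos k').1 = a)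
    (p := fun k' : Fin lam.card => (k' : ℕ) < r)
  have totals : (Finset.univ.filter fun k' : Fin lam.card => (U.pos k').1 = a).card
      = (Finset.univ.filter fun k' : Fin lam.card => (T.pos k').1 = a).card := by
    rw [SYT.rowcard_eq U a, SYT.rowcard_eq T a]
  have f2 : cntU = cntT := by omega
  have hck : (T.pos k).2 = (U.pos j).2 := by rw [hk]
  omega

theorem countbound (lam : YoungDiagram) (r : ℕ) (hr : r ≤ lam.card)
    (T S : SYT lam) (hag : ∀ j : Fin lam.card, r ≤ (j : ℕ) → T.pos j = S.pos j) :
    |(llIndex T : ℤ) - (llIndex S : ℤ)| ≤ (r.factorial : ℤ) := by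
  set A : Set (SYT lam) := {U | ∀ j : Fin lam.card, r ≤ (j : ℕ) → (U.pos j).1 = (T.pos j).1}
    with hAdef
  have hagrow : ∀ j : Fin lam.card, r ≤ (j : ℕ) → (T.pos j).1 = (S.pos j).1 :=
    fun j hj => by rw [hag j hj]
  -- key transfer lemma
  have key : ∀ U : SYT lam, U ∉ A → (lastLetterLT U T ↔ lastLetterLT U S) := by
    intro U hU
    constructor
    · rintro ⟨k, hk1, hk2⟩
      have hkr : r ≤ (k : ℕ) := by
        by_contra hlt
        push_neg at hlt
        exact hU (fun j hj => hk2 j (Fin.lt_def.2 (lt_of_lt_of_le hlt hj)))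
      refine ⟨k, by rw [← hagrow k hkr]; exact hk1, fun j hj => ?_⟩
      rw [hk2 j hj, hagrow j (le_trans hkr (le_of_lt (Fin.lt_def.1 hj)))]
    · rintro ⟨k, hk1, hk2⟩
      have hkr : r ≤ (k : ℕ) := by
        by_contra hlt
        push_neg at hlt
        exact hU (fun j hj =>
          (hk2 j (Fin.lt_def.2 (lt_of_lt_of_le hlt hj))).trans (hagrow j hj).symm)
      refine ⟨k, by rw [hagrow k hkr]; exact hk1, fun j hj => ?_⟩
      rw [hk2 j hj, hagrow j (le_trans hkr (le_of_lt (Fin.lt_def.1 hj)))]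
  -- bound on A
  have hAcard : A.ncard ≤ r.factorial := by
    rw [← Nat.card_coe_set_eq]
    set D : Finset (ℕ × ℕ) :=
      Finset.univ.image (fun i : Fin r => T.pos (Fin.castLE hr i)) with hDdef
    have hDcard : D.card = r := by
      rw [hDdef, Finset.card_image_of_injective _
        (fun i i' h => by
          have := T.inj h
          exact Fin.ext (by simpa using congrArg Fin.val this)),
        Finset.card_univ, Fintype.card_fin]
    have hΦinj : Function.Injective
        (fun (U : ↥A) => (⟨fun i => ⟨U.1.pos (Fin.castLE hr i), by
            obtain ⟨i', hi'⟩ := small_cells lam r hr T U.1 U.2 i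
            exact Finset.mem_image.2 ⟨i', Finset.mem_univ _, hi'⟩⟩,
          fun i i' h => by
            have := U.1.inj (congrArg Subtype.val h)
            exact Fin.ext (by simpa using congrArg Fin.val this)⟩ :
          Fin r ↪ {x // x ∈ D})) := by
      intro U V h
      apply Subtype.ext
      apply SYT.ext_of_rows
      intro j
      by_cases hj : (j : ℕ) < r
      · have hjj : j = Fin.castLE hr ⟨(j : ℕ), hj⟩ := Fin.ext rfl
        rw [hjj]
        have h2 := DFunLike.congr_fun h (⟨(j : ℕ), hj⟩ : Fin r)
        exact congrArg (fun c => c.1) (congrArg Subtype.val h2)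
      · push_neg at hj
        rw [U.2 j hj, V.2 j hj]
    calc Nat.card ↥A ≤ Nat.card (Fin r ↪ {x // x ∈ D}) :=
          Nat.card_le_card_of_injective _ hΦinj
      _ = r.factorial := by
          rw [Nat.card_eq_fintype_card, Fintype.card_embedding_eq, Fintype.card_coe,
            hDcard, Fintype.card_fin, Nat.descFactorial_self]
  -- set inclusions
  have hBsub : {U : SYT lam | lastLetterLT U T} ⊆ {U | lastLetterLT U S} ∪ A := by
    intro U hUB
    by_cases hUA : U ∈ A
    · exact Or.inr hUA
    · exact Or.inl ((key U hUA).1 hUB)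
  have hCsub : {U : SYT lam | lastLetterLT U S} ⊆ {U | lastLetterLT U T} ∪ A := by
    intro U hUC
    by_cases hUA : U ∈ A
    · exact Or.inr hUA
    · exact Or.inl ((key U hUA).2 hUC)
  have h1 : ({U : SYT lam | lastLetterLT U T}).ncard
      ≤ ({U : SYT lam | lastLetterLT U S}).ncard + A.ncard :=
    le_trans (Set.ncard_le_ncard hBsub (Set.toFinite _)) (Set.ncard_union_le _ _)
  have h2 : ({U : SYT lam | lastLetterLT U S}).ncard
      ≤ ({U : SYT lam | lastLetterLT U T}).ncard + A.ncard :=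
    le_trans (Set.ncard_le_ncard hCsub (Set.toFinite _)) (Set.ncard_union_le _ _)
  have hB : llIndex T = ({U : SYT lam | lastLetterLT U T}).ncard := by
    rw [← Nat.card_coe_set_eq]; rfl
  have hC : llIndex S = ({U : SYT lam | lastLetterLT U S}).ncard := by
    rw [← Nat.card_coe_set_eq]; rfl
  rw [abs_sub_le_iff]
  constructor <;> (rw [hB, hC]; omega)


theorem gen_top (r : ℕ) :
    Submonoid.closure {τ : Equiv.Perm (Fin r) |
      ∃ a b : Fin r, (b : ℕ) = (a : ℕ) + 1 ∧ τ = Equiv.swap a b} = ⊤ := by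
  match r with
  | 0 =>
    apply top_unique
    intro x _
    have : x = 1 := Subsingleton.elim _ _
    rw [this]; exact Submonoid.one_mem _
  | (r' + 1) =>
    apply top_unique
    rw [← Equiv.Perm.mclosure_swap_castSucc_succ r']
    apply Submonoid.closure_le.2
    rintro _ ⟨i, rfl⟩
    exact Submonoid.subset_closure ⟨i.castSucc, i.succ, by simp, rfl⟩

theorem viaEmbedding_swap {α β : Type*} [DecidableEq α] [DecidableEq β]
    (f : α ↪ β) (a b : α) :
    (Equiv.swap a b).viaEmbedding f = Equiv.swap (f a) (f b) := by
  ext x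
  by_cases hx : x ∈ Set.range f
  · obtain ⟨y, rfl⟩ := hx
    rw [Equiv.Perm.viaEmbedding_apply, f.injective.swap_apply]
  · rw [Equiv.Perm.viaEmbedding_apply_of_notMem _ _ _ hx,
      Equiv.swap_apply_of_ne_of_ne (fun h => hx ⟨a, h.symm⟩) (fun h => hx ⟨b, h.symm⟩)]

theorem vanish (lam : YoungDiagram)
    (ρ : Equiv.Perm (Fin lam.card) → SYT lam → SYT lam → ℝ)
    (hρ : IsYoungOrthogonal lam ρ)
    (r : ℕ) (hr : r ≤ lam.card) (σ : Equiv.Perm (Fin r)) (T S : SYT lam)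
    (hdis : ¬ ∀ j : Fin lam.card, r ≤ (j : ℕ) → T.pos j = S.pos j) :
    ρ (σ.viaEmbedding (Fin.castLEEmb hr)) T S = 0 := by
  obtain ⟨hone, hmul, hswap⟩ := hρ
  have hmem : σ ∈ Submonoid.closure {τ : Equiv.Perm (Fin r) |
      ∃ a b : Fin r, (b : ℕ) = (a : ℕ) + 1 ∧ τ = Equiv.swap a b} := by
    rw [gen_top r]; exact Submonoid.mem_top σ
  induction hmem using Submonoid.closure_induction generalizing T S with
  | mem τ hτ =>
    obtain ⟨a, b, hab, rfl⟩ := hτ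
    rw [viaEmbedding_swap]
    have hab' : ((Fin.castLEEmb hr b : Fin lam.card) : ℕ)
        = ((Fin.castLEEmb hr a : Fin lam.card) : ℕ) + 1 := by
      simpa using hab
    rw [hswap _ _ hab' T S]
    split_ifs with h1 h2
    · exact absurd (fun j _ => by rw [h1]) hdis
    · refine absurd (fun j hj => ?_) hdis
      have hja : j ≠ Fin.castLEEmb hr a := by
        intro h; rw [h] at hj; simp at hj; omega
      have hjb : j ≠ Fin.castLEEmb hr b := by
        intro h; rw [h] at hj; simp at hj; omega
      have := congrFun h2 j
      simp only [Function.comp_apply, Equiv.swap_apply_of_ne_of_ne hja hjb] at this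
      rw [this]
    · rfl
  | one =>
    have h1 : (1 : Equiv.Perm (Fin r)).viaEmbedding (Fin.castLEEmb hr) = 1 := by
      rw [← Equiv.Perm.viaEmbeddingHom_apply, map_one]
    rw [h1, hone]
    rw [if_neg]
    intro h
    exact hdis (fun j _ => by rw [h])
  | mul x y hx hy ihx ihy =>
    have hmulv : (x * y).viaEmbedding (Fin.castLEEmb hr)
        = x.viaEmbedding (Fin.castLEEmb hr) * y.viaEmbedding (Fin.castLEEmb hr) := by
      rw [← Equiv.Perm.viaEmbeddingHom_apply, map_mul,
        Equiv.Perm.viaEmbeddingHom_apply, Equiv.Perm.viaEmbeddingHom_apply]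
    rw [hmulv, hmul]
    have hz : ∀ U : SYT lam,
        ρ (x.viaEmbedding (Fin.castLEEmb hr)) T U * ρ (y.viaEmbedding (Fin.castLEEmb hr)) U S = 0 := by
      intro U
      by_cases hTU : ∀ j : Fin lam.card, r ≤ (j : ℕ) → T.pos j = U.pos j
      · have hUS : ¬ ∀ j : Fin lam.card, r ≤ (j : ℕ) → U.pos j = S.pos j :=
          fun h => hdis (fun j hj => (hTU j hj).trans (h j hj))
        rw [ihy U S hUS, mul_zero]
      · rw [ihx T U hTU, zero_mul]
    calc (∑ᶠ U : SYT lam, ρ (x.viaEmbedding (Fin.castLEEmb hr)) T U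
          * ρ (y.viaEmbedding (Fin.castLEEmb hr)) U S)
        = ∑ᶠ _ : SYT lam, (0 : ℝ) := finsum_congr hz
      _ = 0 := finsum_zero


/-- Let `σ ∈ S_r` and `λ ⊢ n` with `n > r`.  In Young's orthogonal representation ordered by
the last-letter order, `π^λ(σ)_{i,j} = 0` whenever `|i − j| > r!`. -/
theorem stmt11 (lam : YoungDiagram)
    (ρ : Equiv.Perm (Fin lam.card) → SYT lam → SYT lam → ℝ)
    (hρ : IsYoungOrthogonal lam ρ)
    (n r : ℕ) (hn : lam.card = n) (hrn : r < n)
    (σ : Equiv.Perm (Fin r)) (T S : SYT lam)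
    (hfar : (r.factorial : ℤ) < |(llIndex T : ℤ) - (llIndex S : ℤ)|) :
    ρ (σ.viaEmbedding (Fin.castLEEmb (show r ≤ lam.card by omega))) T S = 0 := by
  by_cases hag : ∀ j : Fin lam.card, r ≤ (j : ℕ) → T.pos j = S.pos j
  · exact absurd (countbound lam r (by omega) T S hag) (not_le.2 hfar)
  · exact vanish lam ρ hρ r (by omega) σ T S hag

end
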